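/- Let G be a group with maps B₁, B₂: G → G such that the descendent operation a ∘ b = B₁(a)·b·B₂(a) is associative. If the center of G is trivial, then (G, B₁, B₂) is a Rota-Baxter system, i.e., B₁(a)B₁(b) = B₁(a ∘ b) and B₂(b)B₂(a) = B₂(a ∘ b) for all a,b ∈ G. -/
import Mathlib


theorem stmt_6 {G : Type*} [Group G] (B₁ B₂ : G → G)
    (circ : G → G → G) (hcirc : ∀ a b, circ a b = B₁ a * b * B₂ a)
    (hassoc : ∀ a b c : G, circ (circ a b) c = circ a (circ b c))
    (hcenter : ∀ a : G, a ∈ Subgroup.center G → a = 1) :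
    (∀ a b : G, B₁ a * B₁ b = B₁ (circ a b)) ∧
    (∀ a b : G, B₂ b * B₂ a = B₂ (circ a b)) := by
  have key : ∀ a b c, B₁ (circ a b) * c * B₂ (circ a b)
      = (B₁ a * B₁ b) * c * (B₂ b * B₂ a) := by
    intro a b c
    have h := hassoc a b c
    rw [hcirc (circ a b) c, hcirc a (circ b c), hcirc b c] at h
    rw [h]; group
  have main : ∀ a b, B₁ a * B₁ b = B₁ (circ a b) ∧ B₂ b * B₂ a = B₂ (circ a b) := by
    intro a b
    set u := B₁ (circ a b) with hu
    set v := B₂ (circ a b) with hv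
    set p := B₁ a * B₁ b with hp
    set q := B₂ b * B₂ a with hq
    have h1 : u * v = p * q := by have := key a b 1; simpa using this
    have hqv : q = p⁻¹ * u * v := by
      rw [mul_assoc, h1]; group
    have hz : ∀ c : G, (p⁻¹ * u) * c = c * (p⁻¹ * u) := by
      intro c
      have h2 : u * c * v = p * c * q := key a b c
      rw [hqv] at h2
      have h3 : u * c = p * c * (p⁻¹ * u) := by
        have := mul_right_cancel (b := v) (by rw [h2]; group : u * c * v = (p * c * (p⁻¹ * u)) * v)
        exact this
      calc p⁻¹ * u * c = p⁻¹ * (u * c) := by group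
        _ = p⁻¹ * (p * c * (p⁻¹ * u)) := by rw [h3]
        _ = c * (p⁻¹ * u) := by group
    have hz1 : p⁻¹ * u = 1 := by
      apply hcenter
      rw [Subgroup.mem_center_iff]
      intro c; exact (hz c).symm
    have hup : p = u := inv_mul_eq_one.mp hz1
    constructor
    · exact hup
    · rw [hqv, ← hup]; group
  exact ⟨fun a b => (main a b).1, fun a b => (main a b).2⟩
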